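/- The characteristic function of −V, where V = (2-p)IJ − p·max(I,J) for independent Bernoulli(p) variables I, J, is f(t) = p²e^{−2it(1−p)} + 2p(1−p)e^{itp} + (1−p)². Moreover, if n(1−p_n) → c > 0, then n(f_n(t) − 1) → 2c(e^{it} − it − 1) for every real t, where f_n is this function with p = p_n. -/

import Mathlib

open MeasureTheory ProbabilityTheory Filter
open scoped ENNReal

/-- Two independent Bernoulli(p) random variables `(I, J)`, as a product measure on
`Bool × Bool`. -/
noncomputable def bernPair (p : ℝ≥0∞) (hp : p ≤ 1) : Measure (Bool × Bool) :=
  ((PMF.ofFintype (fun b => cond b p (1 - p)) (by simp [add_tsub_cancel_of_le hp])).toMeasure).prod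
    ((PMF.ofFintype (fun b => cond b p (1 - p)) (by simp [add_tsub_cancel_of_le hp])).toMeasure)

/-- The real-valued indicator of a Boolean. -/
def bInd (b : Bool) : ℝ := if b then 1 else 0

/-- `V = (2-p) I J − p max(I, J)`. -/
noncomputable def Vb (p : ℝ) (ω : Bool × Bool) : ℝ :=
  (2 - p) * bInd ω.1 * bInd ω.2 - p * max (bInd ω.1) (bInd ω.2)

/-- The claimed characteristic function of `−V`:
`f(t) = p² e^{−2it(1−p)} + 2p(1−p) e^{itp} + (1−p)²`. -/
noncomputable def charFun (p : ℝ) (t : ℝ) : ℂ :=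
  (p : ℂ) ^ 2 * Complex.exp (-2 * Complex.I * t * (1 - (p : ℂ))) +
    2 * p * (1 - (p : ℂ)) * Complex.exp (Complex.I * t * (p : ℂ)) + (1 - (p : ℂ)) ^ 2

/-- The characteristic function of `−V` is `f(t) = p² e^{−2it(1−p)} + 2p(1−p) e^{itp}
+ (1−p)²`; moreover, if `n(1−p_n) → c > 0` then `n(f_n(t) − 1) → 2c(e^{it} − it − 1)`
for every real `t`. -/
theorem charFun_negV (p : ℝ) (hp : p ∈ Set.Icc (0 : ℝ) 1)
    (pseq : ℕ → ℝ) (hpseq : ∀ n, pseq n ∈ Set.Icc (0 : ℝ) 1)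
    (c : ℝ) (hc : 0 < c)
    (hlim : Tendsto (fun n : ℕ => (n : ℝ) * (1 - pseq n)) atTop (nhds c)) :
    (∀ t : ℝ,
      ∫ ω, Complex.exp (-(Complex.I * t * (Vb p ω)))
          ∂(bernPair (ENNReal.ofReal p) (ENNReal.ofReal_le_one.mpr hp.2))
        = charFun p t) ∧
    (∀ t : ℝ,
      Tendsto (fun n : ℕ => (n : ℂ) * (charFun (pseq n) t - 1)) atTop
        (nhds (2 * c * (Complex.exp (Complex.I * t) - Complex.I * t - 1)))) := by
  constructor
  · intro t
    have hmeas : ∀ a b : Bool,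
        (bernPair (ENNReal.ofReal p) (ENNReal.ofReal_le_one.mpr hp.2)) {(a, b)}
          = ENNReal.ofReal (if a then p else 1 - p) * ENNReal.ofReal (if b then p else 1 - p) := by
      intro a b
      have : ({(a,b)} : Set (Bool × Bool)) = {a} ×ˢ {b} := by simp
      rw [bernPair, this, Measure.prod_prod,
        PMF.toMeasure_apply_singleton _ _ (measurableSet_singleton _),
        PMF.toMeasure_apply_singleton _ _ (measurableSet_singleton _)]
      congr 1 <;> cases a <;> cases b <;>
        simp [PMF.ofFintype_apply, ENNReal.ofReal_sub, hp.1]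
    haveI : IsProbabilityMeasure (bernPair (ENNReal.ofReal p) (ENNReal.ofReal_le_one.mpr hp.2)) := by
      unfold bernPair; infer_instance
    rw [integral_fintype .of_finite]
    rw [Fintype.sum_prod_type]
    simp only [Fintype.sum_bool, Measure.real, hmeas]
    have h1 : ((1 : ℝ≥0∞) - ENNReal.ofReal p).toReal = 1 - p := by
      rw [← ENNReal.ofReal_one, ← ENNReal.ofReal_sub _ hp.1, ENNReal.toReal_ofReal (by linarith [hp.2])]
    simp only [Bool.false_eq_true, if_true, if_false, ENNReal.toReal_mul, ENNReal.toReal_ofReal hp.1,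
      ENNReal.toReal_ofReal (by linarith [hp.2] : (0:ℝ) ≤ 1 - p), Vb, bInd]
    have m1 : (1:ℝ) ⊔ 1 = 1 := by norm_num
    have m2 : (1:ℝ) ⊔ 0 = 1 := by norm_num
    have m3 : (0:ℝ) ⊔ 1 = 1 := by norm_num
    have m4 : (0:ℝ) ⊔ 0 = 0 := by norm_num
    simp only [Bool.false_eq_true, if_true, if_false,
      ENNReal.toReal_ofReal hp.1, ENNReal.toReal_ofReal (by linarith [hp.2] : (0:ℝ) ≤ 1-p),
      m1, m2, m3, m4, smul_eq_mul, _root_.charFun]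
    have e1 : -(Complex.I * t * (((2 - p) * 1 * 1 - p * 1 : ℝ) : ℂ)) = -2 * Complex.I * t * (1 - (p:ℂ)) := by push_cast; ring
    have e2 : -(Complex.I * t * (((2 - p) * 1 * 0 - p * 1 : ℝ) : ℂ)) = Complex.I * t * (p:ℂ) := by push_cast; ring
    have e3 : -(Complex.I * t * (((2 - p) * 0 * 1 - p * 1 : ℝ) : ℂ)) = Complex.I * t * (p:ℂ) := by push_cast; ring
    have e4 : -(Complex.I * t * (((2 - p) * 0 * 0 - p * 0 : ℝ) : ℂ)) = 0 := by push_cast; ring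
    rw [e1, e2, e3, e4]
    simp only [Complex.real_smul, Complex.exp_zero]
    push_cast
    ring
  · intro t
    set ε : ℕ → ℝ := fun n => 1 - pseq n with hεdef
    have hε0 : Tendsto ε atTop (nhds 0) := by
      have h2 : Tendsto (fun n : ℕ => ((n : ℝ) * ε n) * (n : ℝ)⁻¹) atTop (nhds (c * 0)) :=
        hlim.mul (tendsto_inv_atTop_zero.comp tendsto_natCast_atTop_atTop)
      rw [mul_zero] at h2
      refine h2.congr' ?_
      filter_upwards [eventually_ge_atTop 1] with n hn
      have : (n : ℝ) ≠ 0 := by positivity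
      field_simp
    have hp1 : Tendsto pseq atTop (nhds 1) := by
      have := (tendsto_const_nhds (x := (1:ℝ)) (f := atTop)).sub hε0
      rw [sub_zero] at this
      exact this.congr (fun n => by simp [hεdef])
    -- complex-valued limits
    have hεC : Tendsto (fun n : ℕ => (Complex.ofReal ((n : ℝ) * ε n))) atTop (nhds (c : ℂ)) :=
      (Complex.continuous_ofReal.tendsto c).comp hlim
    have hpC : Tendsto (fun n : ℕ => ((pseq n : ℝ) : ℂ)) atTop (nhds (1 : ℂ)) := by
      have := (Complex.continuous_ofReal.tendsto 1).comp hp1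
      simpa [Function.comp_def] using this
    -- key algebraic identity
    have key : ∀ n : ℕ, (n : ℂ) * (charFun (pseq n) t - 1) =
        ((pseq n : ℂ))^2 * ((n : ℂ) *
          (Complex.exp (-2 * Complex.I * t * (1 - (pseq n : ℂ))) - 1
            - (-2 * Complex.I * t * (1 - (pseq n : ℂ)))))
        + Complex.ofReal ((n : ℝ) * ε n) * ((pseq n : ℂ)^2 * (-2 * Complex.I * t))
        + Complex.ofReal ((n : ℝ) * ε n) *
            (2 * (pseq n : ℂ) * (Complex.exp (Complex.I * t * (pseq n : ℂ)) - 1)) := by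
      intro n
      simp only [_root_.charFun, hεdef]
      push_cast
      ring
    -- term 1 tends to 0
    have h1 : Tendsto (fun n : ℕ => ((pseq n : ℂ))^2 * ((n : ℂ) *
          (Complex.exp (-2 * Complex.I * t * (1 - (pseq n : ℂ))) - 1
            - (-2 * Complex.I * t * (1 - (pseq n : ℂ)))))) atTop (nhds 0) := by
      have hg : Tendsto (fun n : ℕ => 4 * t^2 * ((n : ℝ) * ε n) * ε n) atTop (nhds 0) := by
        have := ((tendsto_const_nhds (x := 4 * t^2) (f := atTop)).mul hlim).mul hε0
        simpa using this
      refine squeeze_zero_norm' ?_ hg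
      have hsmall : ∀ᶠ n : ℕ in atTop, 2 * |t| * ε n ≤ 1 := by
        have h2 : Tendsto (fun n : ℕ => 2 * |t| * ε n) atTop (nhds (2 * |t| * 0)) :=
          tendsto_const_nhds.mul hε0
        rw [mul_zero] at h2
        exact (h2.eventually_lt_const one_pos).mono fun n h => h.le
      filter_upwards [hsmall] with n hn
      have hpn := hpseq n
      have hεnn : 0 ≤ ε n := by simp only [hεdef]; linarith [hpn.2]
      set z : ℂ := -2 * Complex.I * t * (1 - (pseq n : ℂ)) with hz
      have hzeq : z = ((-2 * t * ε n : ℝ) : ℂ) * Complex.I := by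
        rw [hz]; push_cast [hεdef]; ring
      have habs : ‖z‖ = 2 * |t| * ε n := by
        rw [hzeq, norm_mul, Complex.norm_I, Complex.norm_real, mul_one, Real.norm_eq_abs]
        rw [abs_mul, abs_mul, abs_of_nonneg hεnn]
        norm_num
      have hbound : ‖Complex.exp z - 1 - z‖ ≤ ‖z‖^2 :=
        Complex.norm_exp_sub_one_sub_id_le (by rw [habs]; exact hn)
      have hnormeq : ‖((pseq n : ℂ))^2 * ((n : ℂ) * (Complex.exp z - 1 - z))‖
          = |pseq n|^2 * ((n : ℝ) * ‖Complex.exp z - 1 - z‖) := by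
        simp [norm_mul, Complex.norm_real, Complex.norm_natCast, norm_pow]
      have hple : |pseq n|^2 ≤ 1 := by
        have h : |pseq n| ≤ 1 := abs_le.mpr ⟨by linarith [hpn.1], hpn.2⟩
        nlinarith [abs_nonneg (pseq n)]
      calc ‖((pseq n : ℂ))^2 * ((n : ℂ) * (Complex.exp z - 1 - z))‖
          = |pseq n|^2 * ((n : ℝ) * ‖Complex.exp z - 1 - z‖) := hnormeq
        _ ≤ 1 * ((n : ℝ) * ‖z‖^2) := by
            apply mul_le_mul hple _ (by positivity) one_pos.le
            exact mul_le_mul_of_nonneg_left hbound (Nat.cast_nonneg n)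
        _ = 4 * t^2 * ((n : ℝ) * ε n) * ε n := by
            rw [habs, mul_pow, mul_pow, sq_abs]; ring
    -- term 2 and 3
    have h2 : Tendsto (fun n : ℕ => Complex.ofReal ((n : ℝ) * ε n) * ((pseq n : ℂ)^2 * (-2 * Complex.I * t)))
        atTop (nhds ((c : ℂ) * ((1:ℂ)^2 * (-2 * Complex.I * t)))) :=
      hεC.mul ((hpC.pow 2).mul tendsto_const_nhds)
    have h3 : Tendsto (fun n : ℕ => Complex.ofReal ((n : ℝ) * ε n) *
        (2 * (pseq n : ℂ) * (Complex.exp (Complex.I * t * (pseq n : ℂ)) - 1)))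
        atTop (nhds ((c : ℂ) * (2 * 1 * (Complex.exp (Complex.I * t * 1) - 1)))) := by
      refine hεC.mul ((tendsto_const_nhds.mul hpC).mul ?_)
      exact ((Complex.continuous_exp.tendsto _).comp (tendsto_const_nhds.mul hpC)).sub tendsto_const_nhds
    have htot := (h1.add h2).add h3
    rw [show (0 : ℂ) + (c : ℂ) * ((1:ℂ)^2 * (-2 * Complex.I * t)) + (c : ℂ) * (2 * 1 * (Complex.exp (Complex.I * t * 1) - 1))
        = 2 * c * (Complex.exp (Complex.I * t) - Complex.I * t - 1) by rw [mul_one]; ring] at htot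
    exact htot.congr (fun n => (key n).symm)
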